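/- Let T[f] denote the Toeplitz operator with bounded measurable symbol f on an N-dimensional subspace H ⊂ L²(ν) with orthogonal projection Π: L²(ν) → H, i.e. T[f] = Π ∘ (multiplication by f). Then Tr(T[f²]) − Tr(T[f]²) = Σ_{i=1}^N ‖ f sᵢ − Π(f sᵢ) ‖² ≥ 0 for any orthonormal basis (sᵢ) of H; in particular Tr(T[f]²) ≤ Tr(T[f²]). -/

import Mathlib

open MeasureTheory
open scoped BigOperators

local notation "⟪" x ", " y "⟫" => @inner ℂ _ _ x y

/-- `hbf` from Bessel's inequality, as a standalone lemma. -/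
private lemma aux_proj_norm_sq {E : Type*} [NormedAddCommGroup E] [InnerProductSpace ℂ E]
    {N : ℕ} {v : Fin N → E} (hv : Orthonormal ℂ v) (x : E) :
    ‖x - ∑ i, ⟪v i, x⟫ • v i‖ ^ 2 = ‖x‖ ^ 2 - ∑ i, ‖⟪v i, x⟫‖ ^ 2 := by
  classical
  have h₂ :
      (∑ i, ∑ j, ⟪v i, x⟫ * ⟪x, v j⟫ * ⟪v j, v i⟫) = (∑ k, ⟪v k, x⟫ * ⟪x, v k⟫ : ℂ) :=
    hv.inner_left_right_finset
  have h₃ : ∀ z : ℂ, Complex.re (z * (starRingEnd ℂ) z) = ‖z‖ ^ 2 := by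
    intro z
    simp only [RCLike.mul_conj]
    norm_cast
  rw [@norm_sub_sq ℂ, sub_add]
  simp only [@InnerProductSpace.norm_sq_eq_re_inner ℂ, inner_sum, sum_inner]
  simp only [inner_smul_right, two_mul, inner_smul_left, inner_conj_symm, ← mul_assoc, h₂,
    add_sub_cancel_right, sub_right_inj]
  simp only [map_sum, ← inner_conj_symm x, ← h₃]
  simp only [RCLike.inner_apply]

private lemma lp_coeFn_sum {X : Type*} [MeasurableSpace X] {ν : Measure X}
    {ι : Type*} (t : Finset ι) (u : ι → Lp ℂ 2 ν) :
    ⇑(∑ i ∈ t, u i) =ᵐ[ν] fun x => ∑ i ∈ t, u i x := by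
  classical
  induction t using Finset.induction_on with
  | empty => simpa [Pi.zero_def] using Lp.coeFn_zero ℂ 2 ν
  | @insert a t ha ih =>
      rw [Finset.sum_insert ha]
      filter_upwards [Lp.coeFn_add (u a) (∑ i ∈ t, u i), ih] with x hx hx'
      rw [Finset.sum_insert ha, ← hx']
      simpa using hx

private lemma integral_norm_sq_eq {X : Type*} [MeasurableSpace X] {ν : Measure X}
    (u : Lp ℂ 2 ν) {g : X → ℂ} (hgu : ⇑u =ᵐ[ν] g) :
    ∫ x, ‖g x‖ ^ 2 ∂ν = ‖u‖ ^ 2 := by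
  have h1 : ⟪u, u⟫ = ((∫ x, ‖g x‖ ^ 2 ∂ν : ℝ) : ℂ) := by
    rw [MeasureTheory.L2.inner_def]
    refine (integral_congr_ae (hgu.mono fun x hx => ?_)).trans integral_ofReal
    simp only [RCLike.inner_apply', hx, RCLike.conj_mul]
    norm_cast
  have h2 := @InnerProductSpace.norm_sq_eq_re_inner ℂ _ _ _ _ u
  rw [h1] at h2
  simpa using h2.symm

/-- **Toeplitz trace inequality.** Let `H ⊂ L²(ν)` be the `N`-dimensional subspace with
orthonormal basis `(sᵢ)`, `Π` the orthogonal projection onto `H` (so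
`Π g = Σᵢ ⟨sᵢ, g⟩ sᵢ`), and `T[f] = Π ∘ M_f` the Toeplitz operator with bounded real
symbol `f`. Then `Tr(T[f²]) − Tr(T[f]²) = Σⱼ ‖f sⱼ − Π(f sⱼ)‖² ≥ 0`; in particular
`Tr(T[f]²) ≤ Tr(T[f²])`. Here `Tr(T[f²]) = Σⱼ ∫ f² |sⱼ|² dν` and
`Tr(T[f]²) = Σᵢⱼ |cᵢⱼ|²` with `cᵢⱼ = ∫ f s̄ᵢ sⱼ dν`. -/
theorem toeplitz_trace_inequality
    {X : Type*} [MeasurableSpace X] (ν : Measure X) (N : ℕ)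
    (s : Fin N → X → ℂ) (hs : ∀ i, MemLp (s i) 2 ν)
    (horth : ∀ i j, (∫ x, s i x * (starRingEnd ℂ) (s j x) ∂ν) = if i = j then 1 else 0)
    (f : X → ℝ) (hf : Measurable f) (C : ℝ) (hfC : ∀ x, |f x| ≤ C) :
    ((∑ j, ∫ x, f x ^ 2 * ‖s j x‖ ^ 2 ∂ν) -
        ∑ i, ∑ j, ‖∫ x, (f x : ℂ) * ((starRingEnd ℂ) (s i x) * s j x) ∂ν‖ ^ 2 =
      ∑ j, ∫ x, ‖(f x : ℂ) * s j x -
          ∑ i, (∫ y, (f y : ℂ) * ((starRingEnd ℂ) (s i y) * s j y) ∂ν) * s i x‖ ^ 2 ∂ν) ∧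
    (∑ i, ∑ j, ‖∫ x, (f x : ℂ) * ((starRingEnd ℂ) (s i x) * s j x) ∂ν‖ ^ 2) ≤
      ∑ j, ∫ x, f x ^ 2 * ‖s j x‖ ^ 2 ∂ν := by
  classical
  -- the bounded symbol as a complex function
  have hFm : MemLp (fun x => (f x : ℂ)) ⊤ ν :=
    memLp_top_of_bound (Complex.measurable_ofReal.comp hf).aestronglyMeasurable C
      (Filter.Eventually.of_forall fun x => by simpa using hfC x)
  -- f • sⱼ is in L²
  have hg : ∀ j, MemLp (fun x => (f x : ℂ) * s j x) 2 ν := fun j =>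
    (hs j).mul' hFm
  -- L² elements
  set S : Fin N → Lp ℂ 2 ν := fun i => (hs i).toLp (s i) with hS
  set G : Fin N → Lp ℂ 2 ν := fun j => (hg j).toLp _ with hG
  set c : Fin N → Fin N → ℂ :=
    fun i j => ∫ x, (f x : ℂ) * ((starRingEnd ℂ) (s i x) * s j x) ∂ν with hc
  have hc' : ∀ i j, (∫ y, (f y : ℂ) * ((starRingEnd ℂ) (s i y) * s j y) ∂ν) = c i j :=
    fun i j => rfl
  -- orthonormality of S
  have hSo : Orthonormal ℂ S := by
    rw [orthonormal_iff_ite]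
    intro i j
    have : ⟪S i, S j⟫ = ∫ x, (starRingEnd ℂ) (s i x) * s j x ∂ν := by
      rw [MeasureTheory.L2.inner_def]
      refine integral_congr_ae ?_
      filter_upwards [(hs i).coeFn_toLp, (hs j).coeFn_toLp] with x hx hx'
      rw [RCLike.inner_apply', hx, hx']
    rw [this]
    have h2 : ∫ x, (starRingEnd ℂ) (s i x) * s j x ∂ν =
        (starRingEnd ℂ) (∫ x, s i x * (starRingEnd ℂ) (s j x) ∂ν) := by
      rw [← integral_conj]
      congr 1; funext x; simp [mul_comm]
    rw [h2, horth i j]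
    split <;> simp
  -- inner products with G are the coefficients c
  have hinner : ∀ i j, ⟪S i, G j⟫ = c i j := by
    intro i j
    rw [MeasureTheory.L2.inner_def]
    refine integral_congr_ae ?_
    filter_upwards [(hs i).coeFn_toLp, (hg j).coeFn_toLp] with x hx hx'
    rw [RCLike.inner_apply', hx, hx']
    ring
  -- norms of G j as integrals
  have hnormG : ∀ j, ∫ x, f x ^ 2 * ‖s j x‖ ^ 2 ∂ν = ‖G j‖ ^ 2 := by
    intro j
    rw [← integral_norm_sq_eq (G j) (hg j).coeFn_toLp]
    refine integral_congr_ae (Filter.Eventually.of_forall fun x => ?_)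
    simp [norm_mul, mul_pow, Complex.norm_real, Real.norm_eq_abs, sq_abs]
  -- the residuals
  have hres : ∀ j, ∫ x, ‖(f x : ℂ) * s j x -
      ∑ i, (∫ y, (f y : ℂ) * ((starRingEnd ℂ) (s i y) * s j y) ∂ν) * s i x‖ ^ 2 ∂ν =
      ‖G j‖ ^ 2 - ∑ i, ‖c i j‖ ^ 2 := by
    intro j
    have hcoe : ⇑(G j - ∑ i, c i j • S i) =ᵐ[ν] fun x =>
        (f x : ℂ) * s j x - ∑ i, c i j * s i x := by
      have h1 : ⇑(∑ i : Fin N, c i j • S i) =ᵐ[ν] fun x => ∑ i, c i j * s i x := by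
        refine (lp_coeFn_sum Finset.univ fun i => c i j • S i).trans ?_
        have h2 : ∀ i : Fin N, ⇑(c i j • S i) =ᵐ[ν] fun x => c i j * s i x := by
          intro i
          filter_upwards [Lp.coeFn_smul (c i j) (S i), (hs i).coeFn_toLp] with x hx hx'
          rw [hx, Pi.smul_apply, smul_eq_mul]; exact congrArg _ hx'
        filter_upwards [Filter.eventually_all.2 h2] with x hx
        exact Finset.sum_congr rfl fun i _ => hx i
      filter_upwards [Lp.coeFn_sub (G j) (∑ i, c i j • S i), h1, (hg j).coeFn_toLp]
        with x hx hx' hx''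
      rw [hx, Pi.sub_apply, hx']
      simp only [hG] at hx'' ⊢
      rw [hx'']
    simp only [hc']
    rw [show (∫ x, ‖(f x : ℂ) * s j x - ∑ i, c i j * s i x‖ ^ 2 ∂ν)
        = ‖G j - ∑ i, c i j • S i‖ ^ 2 from integral_norm_sq_eq _ hcoe]
    have h3 := aux_proj_norm_sq hSo (G j)
    simp only [hinner] at h3
    exact h3
  have heq : (∑ j, ∫ x, f x ^ 2 * ‖s j x‖ ^ 2 ∂ν) -
      ∑ i, ∑ j, ‖∫ x, (f x : ℂ) * ((starRingEnd ℂ) (s i x) * s j x) ∂ν‖ ^ 2 =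
      ∑ j, ∫ x, ‖(f x : ℂ) * s j x -
        ∑ i, (∫ y, (f y : ℂ) * ((starRingEnd ℂ) (s i y) * s j y) ∂ν) * s i x‖ ^ 2 ∂ν := by
    calc (∑ j, ∫ x, f x ^ 2 * ‖s j x‖ ^ 2 ∂ν) -
        ∑ i, ∑ j, ‖∫ x, (f x : ℂ) * ((starRingEnd ℂ) (s i x) * s j x) ∂ν‖ ^ 2
        = ∑ j, (‖G j‖ ^ 2 - ∑ i, ‖c i j‖ ^ 2) := by
          rw [Finset.sum_sub_distrib]
          congr 1
          · exact Finset.sum_congr rfl fun j _ => hnormG j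
          · exact Finset.sum_comm
      _ = _ := (Finset.sum_congr rfl fun j _ => (hres j).symm)
  have hnn : 0 ≤ ∑ j, ∫ x, ‖(f x : ℂ) * s j x -
      ∑ i, (∫ y, (f y : ℂ) * ((starRingEnd ℂ) (s i y) * s j y) ∂ν) * s i x‖ ^ 2 ∂ν :=
    Finset.sum_nonneg fun j _ => integral_nonneg fun x => by positivity
  exact ⟨heq, by linarith⟩
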